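/- Let $0<q<1$, $\kappa \ge 1$. Under the principal specialization, the rectangular Schur function satisfies the product formula $Q_i^{(a)} = \prod_{b=1}^a \prod_{j=1}^i \frac{[\kappa+1+j-b]}{[a-b+i-j+1]}$, where $[x] = q^{x/2} - q^{-x/2}$, and these quantities satisfy the Q-system relation $(Q_i^{(a)})^2 = Q_{i-1}^{(a)} Q_{i+1}^{(a)} + Q_i^{(a-1)} Q_i^{(a+1)}$ for $1 \le a \le \kappa$ and $i \ge 1$, with conventions $Q_i^{(0)} = Q_i^{(\kappa+1)} = 1$, $Q_0^{(a)} = 1$, $Q_{-1}^{(a)} = 0$. -/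

import Mathlib

/-- `[x] = q^{x/2} - q^{-x/2}`. -/
noncomputable def br (q x : ℝ) : ℝ := Real.rpow q (x/2) - Real.rpow q (-x/2)

/-- Principally specialized rectangular character
`Q_i^{(a)} = ∏_{b=1}^a ∏_{j=1}^i [κ+1+j-b]/[a-b+i-j+1]` (empty products = 1, so
`Q_0^{(a)} = 1` and `Q_i^{(0)} = 1`; also `Q_i^{(κ+1)} = 1` holds for this formula). -/
noncomputable def QQ (κ : ℕ) (q : ℝ) (a i : ℕ) : ℝ :=
  ∏ b ∈ Finset.Icc 1 a, ∏ j ∈ Finset.Icc 1 i,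
    br q ((κ:ℝ) + 1 + (j:ℝ) - (b:ℝ)) / br q ((a:ℝ) - (b:ℝ) + (i:ℝ) - (j:ℝ) + 1)

lemma br_ne_zero {q : ℝ} (hq0 : 0 < q) (hq1 : q < 1) {x : ℝ} (hx : 0 < x) :
    br q x ≠ 0 := by
  unfold br
  intro h
  have h2 : Real.rpow q (x/2) = Real.rpow q (-x/2) := by linarith [sub_eq_zero.mp h]
  have h4 : Real.rpow q (x/2) < Real.rpow q (-x/2) :=
    (Real.rpow_lt_rpow_left_iff_of_base_lt_one hq0 hq1).mpr (by linarith)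
  linarith

lemma key {q : ℝ} (hq0 : 0 < q) (x m n : ℝ) :
    br q (x+m) * br q m + br q (x-n) * br q n = br q (x+m-n) * br q (m+n) := by
  have hne : ∀ y : ℝ, q ^ y ≠ 0 := fun y => (Real.rpow_pos_of_pos hq0 y).ne'
  have hadd : ∀ y z : ℝ, q ^ (y + z) = q ^ y * q ^ z := fun y z => Real.rpow_add hq0 y z
  have hneg : ∀ y : ℝ, q ^ (-y) = (q ^ y)⁻¹ := fun y => Real.rpow_neg hq0.le y
  have hrw : ∀ y : ℝ, Real.rpow q y = q ^ y := fun _ => rfl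
  have h1 : br q (x+m) = q^(x/2) * q^(m/2) - (q^(x/2))⁻¹ * (q^(m/2))⁻¹ := by
    unfold br
    rw [hrw, hrw, show (x+m)/2 = x/2 + m/2 by ring, show -(x+m)/2 = -(x/2) + -(m/2) by ring,
        hadd, hadd, hneg, hneg]
  have h2 : br q m = q^(m/2) - (q^(m/2))⁻¹ := by
    unfold br; rw [hrw, hrw, show -m/2 = -(m/2) by ring, hneg]
  have h3 : br q (x-n) = q^(x/2) * (q^(n/2))⁻¹ - (q^(x/2))⁻¹ * q^(n/2) := by
    unfold br
    rw [hrw, hrw, show (x-n)/2 = x/2 + -(n/2) by ring, show -(x-n)/2 = -(x/2) + n/2 by ring,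
        hadd, hadd, hneg, hneg]
  have h4 : br q n = q^(n/2) - (q^(n/2))⁻¹ := by
    unfold br; rw [hrw, hrw, show -n/2 = -(n/2) by ring, hneg]
  have h5 : br q (x+m-n) = q^(x/2) * q^(m/2) * (q^(n/2))⁻¹
      - (q^(x/2))⁻¹ * (q^(m/2))⁻¹ * q^(n/2) := by
    unfold br
    rw [hrw, hrw, show (x+m-n)/2 = x/2 + m/2 + -(n/2) by ring,
        show -(x+m-n)/2 = -(x/2) + -(m/2) + n/2 by ring,
        hadd, hadd, hadd, hadd, hneg, hneg, hneg]
  have h6 : br q (m+n) = q^(m/2) * q^(n/2) - (q^(m/2))⁻¹ * (q^(n/2))⁻¹ := by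
    unfold br
    rw [hrw, hrw, show (m+n)/2 = m/2 + n/2 by ring, show -(m+n)/2 = -(m/2) + -(n/2) by ring,
        hadd, hadd, hneg, hneg]
  rw [h1, h2, h3, h4, h5, h6]
  field_simp
  ring

noncomputable def Nn (κ : ℕ) (q : ℝ) (a i : ℕ) : ℝ :=
  ∏ b ∈ Finset.range a, ∏ j ∈ Finset.range i, br q ((κ:ℝ) + 1 + (j:ℝ) - (b:ℝ))

noncomputable def Dd (q : ℝ) (a i : ℕ) : ℝ :=
  ∏ b ∈ Finset.range a, ∏ j ∈ Finset.range i, br q ((a:ℝ) + (i:ℝ) - 1 - (b:ℝ) - (j:ℝ))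

lemma Icc_to_range (f : ℕ → ℝ) (n : ℕ) :
    ∏ k ∈ Finset.Icc 1 n, f k = ∏ k ∈ Finset.range n, f (k + 1) := by
  rw [← Finset.Ico_add_one_right_eq_Icc, Finset.prod_Ico_eq_prod_range]
  simp [add_comm]

lemma QQ_eq (κ : ℕ) (q : ℝ) (a i : ℕ) : QQ κ q a i = Nn κ q a i / Dd q a i := by
  unfold QQ Nn Dd
  rw [Icc_to_range _ a]
  simp only [Icc_to_range]
  simp only [Finset.prod_div_distrib]
  congr 1
  · refine Finset.prod_congr rfl fun b _ => Finset.prod_congr rfl fun j _ => ?_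
    congr 1
    push_cast
    ring
  · refine Finset.prod_congr rfl fun b _ => Finset.prod_congr rfl fun j _ => ?_
    congr 1
    push_cast
    ring

lemma tele (h : ℕ → ℝ) (a : ℕ) :
    (∏ b ∈ Finset.range a, h (b+1)) * h 0 = (∏ b ∈ Finset.range a, h b) * h a := by
  rw [← Finset.prod_range_succ', Finset.prod_range_succ]

lemma tele3 (h f0 f1 : ℕ → ℝ) (x0 x1 : ℝ) (n : ℕ)
    (h0 : ∀ b, f0 b = h (b+1)) (h1 : ∀ b, f1 b = h b) (hx0 : x0 = h 0) (hx1 : x1 = h n) :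
    (∏ b ∈ Finset.range n, f0 b) * x0 = (∏ b ∈ Finset.range n, f1 b) * x1 := by
  simp only [h0, h1, hx0, hx1]
  exact tele h n

lemma Nn_succ_i (κ : ℕ) (q : ℝ) (a i : ℕ) :
    Nn κ q a (i+1) = Nn κ q a i * ∏ b ∈ Finset.range a, br q ((κ:ℝ) + 1 + (i:ℝ) - (b:ℝ)) := by
  unfold Nn
  rw [← Finset.prod_mul_distrib]
  exact Finset.prod_congr rfl fun b _ => Finset.prod_range_succ _ i

lemma Dd_succ_i (q : ℝ) (a i : ℕ) :
    Dd q a (i+1) = Dd q a i * ∏ b ∈ Finset.range a, br q ((a:ℝ) + (i:ℝ) - (b:ℝ)) := by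
  unfold Dd
  rw [← Finset.prod_mul_distrib]
  refine Finset.prod_congr rfl fun b _ => ?_
  rw [Finset.prod_range_succ' (fun j => br q ((a:ℝ) + (i+1:ℕ) - 1 - b - j)) i]
  congr 1
  · refine Finset.prod_congr rfl fun j _ => ?_
    congr 1; push_cast; ring
  · congr 1; push_cast; ring

lemma Nn_succ_a (κ : ℕ) (q : ℝ) (a i : ℕ) :
    Nn κ q (a+1) i = Nn κ q a i * ∏ j ∈ Finset.range i, br q ((κ:ℝ) + 1 + (j:ℝ) - (a:ℝ)) := by
  unfold Nn
  exact Finset.prod_range_succ _ a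

lemma Dd_succ_a (q : ℝ) (a i : ℕ) :
    Dd q (a+1) i = Dd q a i * ∏ j ∈ Finset.range i, br q ((a:ℝ) + (i:ℝ) - (j:ℝ)) := by
  unfold Dd
  rw [Finset.prod_range_succ' (fun b => ∏ j ∈ Finset.range i, br q (((a:ℕ)+1:ℕ) + (i:ℝ) - 1 - b - j)) a]
  congr 1
  · refine Finset.prod_congr rfl fun b _ => Finset.prod_congr rfl fun j _ => ?_
    congr 1; push_cast; ring
  · refine Finset.prod_congr rfl fun j _ => ?_
    congr 1; push_cast; ring

lemma prod_br_ne {q : ℝ} (hq0 : 0 < q) (hq1 : q < 1) (s : Finset ℕ) (f : ℕ → ℝ)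
    (h : ∀ b ∈ s, 0 < f b) : (∏ b ∈ s, br q (f b)) ≠ 0 :=
  Finset.prod_ne_zero_iff.mpr fun b hb => br_ne_zero hq0 hq1 (h b hb)

lemma Dd_ne {q : ℝ} (hq0 : 0 < q) (hq1 : q < 1) (a i : ℕ) : Dd q a i ≠ 0 := by
  unfold Dd
  refine Finset.prod_ne_zero_iff.mpr fun b hb => Finset.prod_ne_zero_iff.mpr fun j hj => ?_
  refine br_ne_zero hq0 hq1 ?_
  have hb' : (b:ℝ) + 1 ≤ a := by exact_mod_cast Finset.mem_range.mp hb
  have hj' : (j:ℝ) + 1 ≤ i := by exact_mod_cast Finset.mem_range.mp hj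
  linarith

lemma star_abs (A0 A1 B0 B1 C0 C1 E0 E1 X Y p u r s : ℝ) (hX : X ≠ 0) (hY : Y ≠ 0)
    (hA : A0*p = A1*X) (hB : B0*Y = B1*u) (hC : C0*r = C1*X) (hE : E0*Y = E1*s)
    (hkey : p*u + r*s = X*Y) :
    A1*B0*C0*E1 + C1*E0*A0*B1 = A0*B1*C0*E1 := by
  refine mul_right_cancel₀ (mul_ne_zero hX hY) ?_
  linear_combination (-(B0*C0*E1*Y))*hA + (A0*p*C0*E1)*hB + (-(E0*Y*A0*B1))*hC
    + (C0*r*A0*B1)*hE + (A0*B1*C0*E1)*hkey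

lemma assemble (NnI DdI NmA DmA N2 D2 NcI DcI N2a D2a A0 A1 B0 B1 C0 C1 E0 E1 : ℝ)
    (hA0 : A0 ≠ 0) (hB0 : B0 ≠ 0) (hC0 : C0 ≠ 0) (hE0 : E0 ≠ 0)
    (hDdI : DdI ≠ 0) (hB1 : B1 ≠ 0) (hE1 : E1 ≠ 0)
    (e1 : NnI = NmA * A0) (e2 : N2 = NnI * A1) (e3 : DdI = DmA * B0) (e4 : D2 = DdI * B1)
    (e5 : NnI = NcI * C0) (e6 : N2a = NnI * C1) (e7 : DdI = DcI * E0) (e8 : D2a = DdI * E1)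
    (hstar : A1*B0*C0*E1 + C1*E0*A0*B1 = A0*B1*C0*E1) :
    (NnI/DdI)^2 = NmA/DmA * (N2/D2) + NcI/DcI * (N2a/D2a) := by
  have hDmA : DmA ≠ 0 := fun h => hDdI (by rw [e3, h, zero_mul])
  have hDcI : DcI ≠ 0 := fun h => hDdI (by rw [e7, h, zero_mul])
  have h1 : NmA = NnI / A0 := by rw [e1]; field_simp
  have h2 : DmA = DdI / B0 := by rw [e3]; field_simp
  have h3 : NcI = NnI / C0 := by rw [e5]; field_simp
  have h4 : DcI = DdI / E0 := by rw [e7]; field_simp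
  rw [h1, h2, h3, h4, e2, e4, e6, e8]
  field_simp
  linear_combination (-(NnI^2)) * hstar

theorem stmt7 (κ : ℕ) (hκ : 1 ≤ κ) (q : ℝ) (hq0 : 0 < q) (hq1 : q < 1)
    (a i : ℕ) (ha1 : 1 ≤ a) (ha2 : a ≤ κ) (hi : 1 ≤ i) :
    (QQ κ q a 0 = 1 ∧ QQ κ q 0 i = 1 ∧ QQ κ q (κ+1) i = 1)
    ∧ (QQ κ q a i)^2
        = QQ κ q a (i-1) * QQ κ q a (i+1) + QQ κ q (a-1) i * QQ κ q (a+1) i := by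
  constructor
  · refine ⟨by simp [QQ], by simp [QQ], ?_⟩
    rw [QQ_eq, div_eq_one_iff_eq (Dd_ne hq0 hq1 _ _)]
    unfold Nn Dd
    refine Finset.prod_congr rfl fun b hb => ?_
    rw [← Finset.prod_range_reflect (fun j => br q ((κ:ℝ) + 1 + (j:ℝ) - (b:ℝ))) i]
    refine Finset.prod_congr rfl fun j hj => ?_
    have hji : j < i := Finset.mem_range.mp hj
    have hc : ((i - 1 - j : ℕ) : ℝ) = (i:ℝ) - 1 - (j:ℝ) := by
      have h1 : i - 1 - j = i - (j+1) := by omega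
      rw [h1, Nat.cast_sub (by omega)]
      push_cast; ring
    congr 1
    rw [hc]
    push_cast
    ring
  · obtain ⟨c, rfl⟩ : ∃ c, a = c + 1 := ⟨a - 1, (Nat.succ_pred_eq_of_pos ha1).symm⟩
    obtain ⟨m, rfl⟩ : ∃ m, i = m + 1 := ⟨i - 1, (Nat.succ_pred_eq_of_pos hi).symm⟩
    simp only [Nat.add_sub_cancel]
    rw [QQ_eq, QQ_eq, QQ_eq, QQ_eq, QQ_eq]
    have hcκ : (c:ℝ) + 1 ≤ (κ:ℝ) := by exact_mod_cast ha2
    have hm0 : (0:ℝ) ≤ (m:ℝ) := Nat.cast_nonneg m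
    -- recursion facts
    have e1 := Nn_succ_i κ q (c+1) m
    have e2 := Nn_succ_i κ q (c+1) (m+1)
    have e3 := Dd_succ_i q (c+1) m
    have e4 := Dd_succ_i q (c+1) (m+1)
    have e5 := Nn_succ_a κ q c (m+1)
    have e6 := Nn_succ_a κ q (c+1) (m+1)
    have e7 := Dd_succ_a q c (m+1)
    have e8 := Dd_succ_a q (c+1) (m+1)
    -- nonvanishing of single products
    have hA0 : (∏ b ∈ Finset.range (c+1), br q ((κ:ℝ) + 1 + (m:ℝ) - (b:ℝ))) ≠ 0 := by
      refine prod_br_ne hq0 hq1 _ _ fun b hb => ?_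
      have hb' : (b:ℝ) ≤ c := by exact_mod_cast Nat.lt_succ_iff.mp (Finset.mem_range.mp hb)
      linarith
    have hB0 : (∏ b ∈ Finset.range (c+1), br q (((c+1:ℕ):ℝ) + (m:ℝ) - (b:ℝ))) ≠ 0 := by
      refine prod_br_ne hq0 hq1 _ _ fun b hb => ?_
      have hb' : (b:ℝ) ≤ c := by exact_mod_cast Nat.lt_succ_iff.mp (Finset.mem_range.mp hb)
      push_cast
      linarith
    have hB1 : (∏ b ∈ Finset.range (c+1), br q (((c+1:ℕ):ℝ) + ((m+1:ℕ):ℝ) - (b:ℝ))) ≠ 0 := by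
      refine prod_br_ne hq0 hq1 _ _ fun b hb => ?_
      have hb' : (b:ℝ) ≤ c := by exact_mod_cast Nat.lt_succ_iff.mp (Finset.mem_range.mp hb)
      push_cast
      linarith
    have hC0 : (∏ j ∈ Finset.range (m+1), br q ((κ:ℝ) + 1 + (j:ℝ) - (c:ℝ))) ≠ 0 := by
      refine prod_br_ne hq0 hq1 _ _ fun j hj => ?_
      have hj' : (0:ℝ) ≤ j := Nat.cast_nonneg j
      linarith
    have hE0 : (∏ j ∈ Finset.range (m+1), br q ((c:ℝ) + ((m+1:ℕ):ℝ) - (j:ℝ))) ≠ 0 := by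
      refine prod_br_ne hq0 hq1 _ _ fun j hj => ?_
      have hj' : (j:ℝ) ≤ m := by exact_mod_cast Nat.lt_succ_iff.mp (Finset.mem_range.mp hj)
      push_cast
      linarith [(Nat.cast_nonneg c : (0:ℝ) ≤ (c:ℝ))]
    have hE1 : (∏ j ∈ Finset.range (m+1), br q (((c+1:ℕ):ℝ) + ((m+1:ℕ):ℝ) - (j:ℝ))) ≠ 0 := by
      refine prod_br_ne hq0 hq1 _ _ fun j hj => ?_
      have hj' : (j:ℝ) ≤ m := by exact_mod_cast Nat.lt_succ_iff.mp (Finset.mem_range.mp hj)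
      push_cast
      linarith [(Nat.cast_nonneg c : (0:ℝ) ≤ (c:ℝ))]
    -- telescoping facts
    have hX : br q ((κ:ℝ) + 1 + (m:ℝ) - (c:ℝ)) ≠ 0 :=
      br_ne_zero hq0 hq1 (show (0:ℝ) < (κ:ℝ) + 1 + (m:ℝ) - (c:ℝ) by linarith)
    have hY : br q ((c:ℝ) + (m:ℝ) + 2) ≠ 0 :=
      br_ne_zero hq0 hq1 (show (0:ℝ) < (c:ℝ) + (m:ℝ) + 2 by positivity)
    have hA : (∏ b ∈ Finset.range (c+1), br q ((κ:ℝ) + 1 + (m:ℝ) - (b:ℝ)))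
          * br q ((κ:ℝ) + (m:ℝ) + 2)
        = (∏ b ∈ Finset.range (c+1), br q ((κ:ℝ) + 1 + ((m+1:ℕ):ℝ) - (b:ℝ)))
          * br q ((κ:ℝ) + 1 + (m:ℝ) - (c:ℝ)) := by
      refine tele3 (fun b => br q ((κ:ℝ) + (m:ℝ) + 2 - (b:ℝ))) _ _ _ _ (c+1)
        (fun b => by congr 1; push_cast; ring) (fun b => by congr 1; push_cast; ring)
        (by congr 1; push_cast; ring) (by congr 1; push_cast; ring)
    have hB : (∏ b ∈ Finset.range (c+1), br q (((c+1:ℕ):ℝ) + (m:ℝ) - (b:ℝ)))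
          * br q ((c:ℝ) + (m:ℝ) + 2)
        = (∏ b ∈ Finset.range (c+1), br q (((c+1:ℕ):ℝ) + ((m+1:ℕ):ℝ) - (b:ℝ)))
          * br q ((m:ℝ) + 1) := by
      refine tele3 (fun b => br q ((c:ℝ) + (m:ℝ) + 2 - (b:ℝ))) _ _ _ _ (c+1)
        (fun b => by congr 1; push_cast; ring) (fun b => by congr 1; push_cast; ring)
        (by congr 1; push_cast; ring) (by congr 1; push_cast; ring)
    have hC : (∏ j ∈ Finset.range (m+1), br q ((κ:ℝ) + 1 + (j:ℝ) - (c:ℝ)))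
          * br q ((κ:ℝ) - (c:ℝ))
        = (∏ j ∈ Finset.range (m+1), br q ((κ:ℝ) + 1 + (j:ℝ) - ((c+1:ℕ):ℝ)))
          * br q ((κ:ℝ) + 1 + (m:ℝ) - (c:ℝ)) := by
      refine tele3 (fun j => br q ((κ:ℝ) + (j:ℝ) - (c:ℝ))) _ _ _ _ (m+1)
        (fun j => by congr 1; push_cast; ring) (fun j => by congr 1; push_cast; ring)
        (by congr 1; push_cast; ring) (by congr 1; push_cast; ring)
    have hE : (∏ j ∈ Finset.range (m+1), br q ((c:ℝ) + ((m+1:ℕ):ℝ) - (j:ℝ)))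
          * br q ((c:ℝ) + (m:ℝ) + 2)
        = (∏ j ∈ Finset.range (m+1), br q (((c+1:ℕ):ℝ) + ((m+1:ℕ):ℝ) - (j:ℝ)))
          * br q ((c:ℝ) + 1) := by
      refine tele3 (fun j => br q ((c:ℝ) + (m:ℝ) + 2 - (j:ℝ))) _ _ _ _ (m+1)
        (fun j => by congr 1; push_cast; ring) (fun j => by congr 1; push_cast; ring)
        (by congr 1; push_cast; ring) (by congr 1; push_cast; ring)
    have hkey : br q ((κ:ℝ) + (m:ℝ) + 2) * br q ((m:ℝ) + 1)
          + br q ((κ:ℝ) - (c:ℝ)) * br q ((c:ℝ) + 1)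
        = br q ((κ:ℝ) + 1 + (m:ℝ) - (c:ℝ)) * br q ((c:ℝ) + (m:ℝ) + 2) := by
      have h := key hq0 ((κ:ℝ)+1) ((m:ℝ)+1) ((c:ℝ)+1)
      rw [show (κ:ℝ)+1+((m:ℝ)+1) = (κ:ℝ)+(m:ℝ)+2 by ring,
          show (κ:ℝ)+1-((c:ℝ)+1) = (κ:ℝ)-(c:ℝ) by ring,
          show (κ:ℝ)+(m:ℝ)+2-((c:ℝ)+1) = (κ:ℝ)+1+(m:ℝ)-(c:ℝ) by ring,
          show (m:ℝ)+1+((c:ℝ)+1) = (c:ℝ)+(m:ℝ)+2 by ring] at h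
      exact h
    have hstar := star_abs _ _ _ _ _ _ _ _ _ _ _ _ _ _ hX hY hA hB hC hE hkey
    exact assemble _ _ _ _ _ _ _ _ _ _ _ _ _ _ _ _ _ _ hA0 hB0 hC0 hE0
      (Dd_ne hq0 hq1 (c+1) (m+1)) hB1 hE1 e1 e2 e3 e4 e5 e6 e7 e8 hstar
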